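/- Let φ: [0,∞) → [0,∞) be continuous, non-decreasing, positive on (0,∞), of at most linear growth, with ∫₀₊ dx/φ(x) = +∞. For γ, ε ≥ 0 let u^{γ,ε} denote the unique solution on [0,1] of u(t) = γ + ∫ₜ¹ (φ(u(s)) + ε) ds. Then for each fixed t ∈ [0,1], lim_{ε→0} lim_{γ→0} u^{γ,ε}(t) = 0. -/

import Mathlib

open MeasureTheory Set Filter Topology

/-- A continuous nonnegative solution on `[0,1]` of the backward integral equation
`u t = γ + ∫ₜ¹ (φ (u s) + ε) ds`. -/
def IsSolODE (φ : ℝ → ℝ) (ε γ : ℝ) (u : ℝ → ℝ) : Prop :=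
  ContinuousOn u (Set.Icc 0 1) ∧ (∀ t ∈ Set.Icc (0:ℝ) 1, 0 ≤ u t) ∧
    ∀ t ∈ Set.Icc (0:ℝ) 1, u t = γ + ∫ s in Set.Ioc t 1, (φ (u s) + ε)

/-- The Osgood condition `∫₀₊ dx / φ x = +∞`. -/
def OsgoodCondition (φ : ℝ → ℝ) : Prop :=
  ∀ δ > (0:ℝ), ∫⁻ x in Set.Ioc (0:ℝ) δ, ENNReal.ofReal (1 / φ x) = ⊤


open intervalIntegral ENNReal

section aux
variable {ψ : ℝ → ℝ} {ε γ : ℝ} {u : ℝ → ℝ}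

lemma sol_one (heq : ∀ t ∈ Set.Icc (0:ℝ) 1, u t = γ + ∫ s in Set.Ioc t 1, (ψ (u s) + ε)) :
    u 1 = γ := by
  have := heq 1 (by norm_num)
  simpa using this

lemma sol_interval (heq : ∀ t ∈ Set.Icc (0:ℝ) 1, u t = γ + ∫ s in Set.Ioc t 1, (ψ (u s) + ε))
    {t : ℝ} (ht : t ∈ Set.Icc (0:ℝ) 1) :
    u t = γ + ∫ s in t..1, (ψ (u s) + ε) := by
  rw [intervalIntegral.integral_of_le ht.2]
  exact heq t ht

lemma sol_deriv (hψc : Continuous ψ) (hc : Continuous u)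
    (heq : ∀ t ∈ Set.Icc (0:ℝ) 1, u t = γ + ∫ s in Set.Ioc t 1, (ψ (u s) + ε))
    {s : ℝ} (hs : s ∈ Set.Icc (0:ℝ) 1) :
    HasDerivWithinAt u (-(ψ (u s) + ε)) (Set.Icc 0 1) s := by
  set h : ℝ → ℝ := fun x => ψ (u x) + ε with hh
  have hhc : Continuous h := (hψc.comp hc).add continuous_const
  have hv : ∀ s' ∈ Set.Icc (0:ℝ) 1, u s' = γ - ∫ x in (1:ℝ)..s', h x := by
    intro s' hs'
    rw [sol_interval heq hs', intervalIntegral.integral_symm]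
    ring
  have hd : HasDerivAt (fun s' => γ - ∫ x in (1:ℝ)..s', h x) (-(h s)) s := by
    have := (hhc.integral_hasStrictDerivAt 1 s).hasDerivAt
    simpa using (this.const_sub γ)
  exact (hd.hasDerivWithinAt).congr hv (hv s hs)

lemma sol_anti (hψc : Continuous ψ) (hψ0 : ∀ x, 0 ≤ ψ x) (hε : 0 ≤ ε) (hc : Continuous u)
    (heq : ∀ t ∈ Set.Icc (0:ℝ) 1, u t = γ + ∫ s in Set.Ioc t 1, (ψ (u s) + ε)) :
    AntitoneOn u (Set.Icc 0 1) := by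
  intro x hx y hy hxy
  have hhc : Continuous fun s => ψ (u s) + ε := (hψc.comp hc).add continuous_const
  have h1 := sol_interval heq hx
  have h2 := sol_interval heq hy
  have hadd : (∫ s in x..y, (ψ (u s) + ε)) + ∫ s in y..(1:ℝ), (ψ (u s) + ε)
      = ∫ s in x..(1:ℝ), (ψ (u s) + ε) :=
    intervalIntegral.integral_add_adjacent_intervals (hhc.intervalIntegrable _ _)
      (hhc.intervalIntegrable _ _)
  have hpos : 0 ≤ ∫ s in x..y, (ψ (u s) + ε) :=
    intervalIntegral.integral_nonneg hxy (fun s _ => add_nonneg (hψ0 _) hε)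
  nlinarith [hpos, h1, h2, hadd]

end aux


section aux2
variable {ψ : ℝ → ℝ} {ε γ : ℝ} {u : ℝ → ℝ}

lemma sol_const (hψc : Continuous ψ) (hc : Continuous u)
    (heq : ∀ t ∈ Set.Icc (0:ℝ) 1, u t = γ + ∫ s in Set.Ioc t 1, (ψ (u s) + ε))
    (ρ : ℝ → ℝ) (hρ : Continuous ρ) {t c : ℝ} (ht : t ∈ Set.Icc (0:ℝ) 1)
    (hc1 : c ∈ Set.Icc (0:ℝ) 1) (htc : t ≤ c)
    (hprod : ∀ s ∈ Set.Icc t c, ρ (u s) * (ψ (u s) + ε) = 1) :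
    (∫ x in (0:ℝ)..(u t), ρ x) + t = (∫ x in (0:ℝ)..(u c), ρ x) + c := by
  set F : ℝ → ℝ := fun y => ∫ x in (0:ℝ)..y, ρ x with hF
  have hFd : ∀ y, HasDerivAt F (ρ y) y := fun y =>
    (hρ.integral_hasStrictDerivAt 0 y).hasDerivAt
  have hFc : Continuous F := continuous_iff_continuousAt.2 fun y => (hFd y).continuousAt
  set g : ℝ → ℝ := fun s => F (u s) + s with hg
  have hgd : ∀ s ∈ Set.Icc t c, HasDerivWithinAt g 0 (Set.Icc t c) s := by
    intro s hs
    have hs01 : s ∈ Set.Icc (0:ℝ) 1 := ⟨le_trans ht.1 hs.1, le_trans hs.2 hc1.2⟩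
    have h1 : HasDerivWithinAt u (-(ψ (u s) + ε)) (Set.Icc 0 1) s :=
      sol_deriv hψc hc heq hs01
    have h2 := h1.mono (Set.Icc_subset_Icc ht.1 hc1.2)
    have h3 : HasDerivWithinAt (fun s' => F (u s')) (ρ (u s) * -(ψ (u s) + ε))
        (Set.Icc t c) s := (hFd (u s)).comp_hasDerivWithinAt s h2
    have h4 := h3.add (hasDerivWithinAt_id s (Set.Icc t c))
    have : ρ (u s) * -(ψ (u s) + ε) + 1 = 0 := by
      have := hprod s hs
      nlinarith [this]
    rw [this] at h4
    exact h4
  have hgc : ContinuousOn g (Set.Icc t c) :=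
    ((hFc.comp hc).add continuous_id).continuousOn
  have := constant_of_has_deriv_right_zero hgc (fun x hx =>
    (hgd x (Set.Ico_subset_Icc_self hx)).mono_of_mem_nhdsWithin (Icc_mem_nhdsGE_of_mem hx)) c
    (Set.right_mem_Icc.2 htc)
  simpa [hg] using this.symm

end aux2


section aux3
variable {ψ : ℝ → ℝ} {ε γ : ℝ} {u : ℝ → ℝ}

/-- Lemma E : for `ε > 0`, `F (u t) + t = F γ + 1` where `F y = ∫ 0..y (ψ+ε)⁻¹`. -/
lemma sol_E (hψc : Continuous ψ) (hψ0 : ∀ x, 0 ≤ ψ x) (hε : 0 < ε) (hc : Continuous u)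
    (heq : ∀ t ∈ Set.Icc (0:ℝ) 1, u t = γ + ∫ s in Set.Ioc t 1, (ψ (u s) + ε))
    {t : ℝ} (ht : t ∈ Set.Icc (0:ℝ) 1) :
    (∫ x in (0:ℝ)..(u t), (ψ x + ε)⁻¹) + t = (∫ x in (0:ℝ)..γ, (ψ x + ε)⁻¹) + 1 := by
  have hpos : ∀ x, 0 < ψ x + ε := fun x => add_pos_of_nonneg_of_pos (hψ0 x) hε
  have hρ : Continuous fun x => (ψ x + ε)⁻¹ :=
    (hψc.add continuous_const).inv₀ (fun x => (hpos x).ne')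
  have h := sol_const hψc hc heq _ hρ ht (Set.right_mem_Icc.2 zero_le_one) ht.2
    (fun s _ => inv_mul_cancel₀ (hpos (u s)).ne')
  rwa [sol_one heq] at h

/-- Lemma K : key integral inequality. -/
lemma sol_K (hψc : Continuous ψ) (hψm : Monotone ψ) (hψ0 : ∀ x, 0 ≤ ψ x)
    (hψp : ∀ x > (0:ℝ), 0 < ψ x) (hε : 0 ≤ ε) (hc : Continuous u)
    (heq : ∀ t ∈ Set.Icc (0:ℝ) 1, u t = γ + ∫ s in Set.Ioc t 1, (ψ (u s) + ε))
    {t c δ' : ℝ} (ht : t ∈ Set.Icc (0:ℝ) 1) (hc0 : 0 < c) (hγc : γ ≤ c) (hcd : c < δ')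
    (hδu : δ' ≤ u t) :
    ∫ x in Set.Ioc c δ', (ψ x + ε)⁻¹ ≤ 1 := by
  have hψcp : 0 < ψ c := hψp c hc0
  have hψcε : 0 < ψ c + ε := by linarith
  set ρ : ℝ → ℝ := fun x => (ψ (max x c) + ε)⁻¹ with hρdef
  have hden : ∀ x, 0 < ψ (max x c) + ε := fun x =>
    lt_of_lt_of_le hψcε (by have := hψm (le_max_right x c); linarith)
  have hρ : Continuous ρ :=
    ((hψc.comp (continuous_id.max continuous_const)).add continuous_const).inv₀
      fun x => (hden x).ne'
  have hρnn : ∀ x, 0 ≤ ρ x := fun x => le_of_lt (inv_pos.2 (hden x))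
  have u1 : u 1 = γ := sol_one heq
  have hanti := sol_anti hψc hψ0 hε hc heq
  obtain ⟨bb, hbbmem, hbbc⟩ : ∃ b ∈ Set.Icc t 1, u b = c := by
    have h := intermediate_value_Icc' ht.2 hc.continuousOn
    have : c ∈ Set.Icc (u 1) (u t) := ⟨u1 ▸ hγc, le_trans hcd.le hδu⟩
    obtain ⟨b, hb, hub⟩ := h this
    exact ⟨b, hb, hub⟩
  have hbb01 : bb ∈ Set.Icc (0:ℝ) 1 := ⟨le_trans ht.1 hbbmem.1, hbbmem.2⟩
  have hprod : ∀ s ∈ Set.Icc t bb, ρ (u s) * (ψ (u s) + ε) = 1 := by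
    intro s hs
    have hs01 : s ∈ Set.Icc (0:ℝ) 1 := ⟨le_trans ht.1 hs.1, le_trans hs.2 hbb01.2⟩
    have husc : c ≤ u s := hbbc ▸ hanti hs01 hbb01 hs.2
    have hmax : max (u s) c = u s := max_eq_left husc
    have : ρ (u s) = (ψ (u s) + ε)⁻¹ := by rw [hρdef]; simp [hmax]
    rw [this]
    exact inv_mul_cancel₀ (lt_of_lt_of_le hψcε (by have := hψm husc; linarith)).ne'
  have hconst := sol_const hψc hc heq ρ hρ ht hbb01 hbbmem.1 hprod
  rw [hbbc] at hconst
  -- hconst : ∫ 0..(u t) ρ + t = ∫ 0..c ρ + bb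
  have hsplit : (∫ x in (0:ℝ)..c, ρ x) + ∫ x in c..(u t), ρ x = ∫ x in (0:ℝ)..(u t), ρ x :=
    intervalIntegral.integral_add_adjacent_intervals (hρ.intervalIntegrable _ _)
      (hρ.intervalIntegrable _ _)
  have hkey : ∫ x in c..(u t), ρ x = bb - t := by linarith
  have hsplit2 : (∫ x in c..δ', ρ x) + ∫ x in δ'..(u t), ρ x = ∫ x in c..(u t), ρ x :=
    intervalIntegral.integral_add_adjacent_intervals (hρ.intervalIntegrable _ _)
      (hρ.intervalIntegrable _ _)
  have htail : 0 ≤ ∫ x in δ'..(u t), ρ x :=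
    intervalIntegral.integral_nonneg hδu (fun x _ => hρnn x)
  have hcongr : ∫ x in Set.Ioc c δ', (ψ x + ε)⁻¹ = ∫ x in c..δ', ρ x := by
    rw [intervalIntegral.integral_of_le hcd.le]
    refine setIntegral_congr_fun measurableSet_Ioc (fun x hx => ?_)
    rw [hρdef]; simp [max_eq_left hx.1.le]
  rw [hcongr]
  have hbb1 : bb ≤ 1 := hbbmem.2
  have ht0 : 0 ≤ t := ht.1
  linarith

end aux3

section aux4
variable {ψ : ℝ → ℝ}

lemma osgood_extract (hψc : Continuous ψ) (hψm : Monotone ψ) (hψp : ∀ x > (0:ℝ), 0 < ψ x)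
    (hOsg : ∀ δ > (0:ℝ), ∫⁻ x in Set.Ioc (0:ℝ) δ, ENNReal.ofReal ((ψ x)⁻¹) = ⊤)
    {δ : ℝ} (hδ : 0 < δ) :
    ∃ c, 0 < c ∧ c < δ ∧ 1 < ∫ x in Set.Ioc c δ, (ψ x)⁻¹ := by
  set g : ℝ → ℝ≥0∞ := fun x => ENNReal.ofReal ((ψ x)⁻¹) with hg
  have hgm : Measurable g := ENNReal.measurable_ofReal.comp (hψc.measurable.inv)
  set ν : Measure ℝ := volume.withDensity g with hν
  have hνapp : ∀ s : Set ℝ, MeasurableSet s → ν s = ∫⁻ x in s, g x := fun s hs =>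
    withDensity_apply g hs
  have hνtop : ν (Set.Ioc 0 δ) = ⊤ := by rw [hνapp _ measurableSet_Ioc]; exact hOsg δ hδ
  set s : ℕ → Set ℝ := fun n => Set.Ioc (δ / (n + 2)) δ with hs
  have hmono : Monotone s := by
    intro m n hmn
    apply Set.Ioc_subset_Ioc_left
    apply div_le_div_of_nonneg_left hδ.le (by positivity)
    have : (m : ℝ) ≤ n := Nat.cast_le.2 hmn
    linarith
  have hunion : ⋃ n, s n = Set.Ioc 0 δ := by
    apply Set.Subset.antisymm
    · exact Set.iUnion_subset fun n => Set.Ioc_subset_Ioc_left (by positivity)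
    · intro x hx
      obtain ⟨n, hn⟩ := exists_nat_gt (δ / x)
      refine Set.mem_iUnion.2 ⟨n, ?_, hx.2⟩
      have hx0 : 0 < x := hx.1
      rw [div_lt_iff₀ hx0] at hn
      rw [div_lt_iff₀ (by positivity : (0:ℝ) < (n:ℝ) + 2)]
      nlinarith [hx0.le]
  have htend : Filter.Tendsto (fun n => ν (s n)) Filter.atTop (𝓝 (ν (⋃ n, s n))) :=
    tendsto_measure_iUnion_atTop hmono
  rw [hunion, hνtop] at htend
  have : ∀ᶠ n in Filter.atTop, (1 : ℝ≥0∞) < ν (s n) :=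
    htend.eventually (eventually_gt_nhds (by norm_num : (1:ℝ≥0∞) < ⊤))
  obtain ⟨n, hn⟩ := this.exists
  set c : ℝ := δ / (n + 2) with hc
  have hc0 : 0 < c := by positivity
  have hcδ : c < δ := by
    rw [hc, div_lt_iff₀ (by positivity : (0:ℝ) < (n:ℝ) + 2)]
    nlinarith
  refine ⟨c, hc0, hcδ, ?_⟩
  have hint : IntegrableOn (fun x => (ψ x)⁻¹) (Set.Ioc c δ) := by
    have hcont : ContinuousOn (fun x => (ψ x)⁻¹) (Set.Icc c δ) :=
      (hψc.continuousOn).inv₀ fun x hx => (hψp x (lt_of_lt_of_le hc0 hx.1)).ne'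
    exact (hcont.integrableOn_Icc).mono_set Set.Ioc_subset_Icc_self
  have hnn : 0 ≤ᵐ[volume.restrict (Set.Ioc c δ)] fun x => (ψ x)⁻¹ := by
    filter_upwards [ae_restrict_mem measurableSet_Ioc] with x hx
    exact le_of_lt (inv_pos.2 (hψp x (lt_trans hc0 hx.1)))
  have heq : ENNReal.ofReal (∫ x in Set.Ioc c δ, (ψ x)⁻¹) = ν (s n) := by
    rw [hνapp _ measurableSet_Ioc]
    exact ofReal_integral_eq_lintegral_ofReal hint hnn
  rw [← heq] at hn
  have := (ENNReal.ofReal_lt_ofReal_iff_of_nonneg zero_le_one).1 (by simpa using hn)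
  exact this
end aux4

/-- for the unique solutions `u γ ε` of
`u t = γ + ∫ₜ¹ (φ (u s) + ε) ds`, the iterated limit
`lim_{ε→0} lim_{γ→0} u^{γ,ε}(t) = 0` holds for each fixed `t ∈ [0,1]`. -/
theorem stmt1 (φ : ℝ → ℝ) (a b : ℝ) (ha : 0 ≤ a) (hb : 0 ≤ b)
    (hφc : ContinuousOn φ (Set.Ici 0)) (hφm : MonotoneOn φ (Set.Ici 0))
    (hφnn : ∀ x ≥ (0:ℝ), 0 ≤ φ x) (hφpos : ∀ x > (0:ℝ), 0 < φ x)
    (hφgrow : ∀ x ≥ (0:ℝ), φ x ≤ a * x + b) (hφOsg : OsgoodCondition φ)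
    (u : ℝ → ℝ → ℝ → ℝ) (hu : ∀ γ ≥ (0:ℝ), ∀ ε ≥ (0:ℝ), IsSolODE φ ε γ (u γ ε))
    (t : ℝ) (ht : t ∈ Set.Icc (0:ℝ) 1) :
    ∃ L : ℝ → ℝ,
      (∀ ε ≥ (0:ℝ), Filter.Tendsto (fun γ => u γ ε t) (nhdsWithin 0 (Set.Ici 0)) (nhds (L ε))) ∧
      Filter.Tendsto L (nhdsWithin 0 (Set.Ici 0)) (nhds 0) := by
  classical
  set ψ : ℝ → ℝ := fun x => φ (max x 0) with hψdef
  have hψφ : ∀ x ≥ (0:ℝ), ψ x = φ x := fun x hx => by rw [hψdef]; simp [max_eq_left hx]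
  have hψc : Continuous ψ :=
    hφc.comp_continuous (continuous_id.max continuous_const) (fun x => le_max_right x 0)
  have hψm : Monotone ψ := fun x y h =>
    hφm (le_max_right x 0) (le_max_right y 0) (max_le_max h le_rfl)
  have hψ0 : ∀ x, 0 ≤ ψ x := fun x => hφnn _ (le_max_right x 0)
  have hψp : ∀ x > (0:ℝ), 0 < ψ x := fun x hx => by rw [hψφ x hx.le]; exact hφpos x hx
  have hOsg : ∀ δ > (0:ℝ), ∫⁻ x in Set.Ioc (0:ℝ) δ, ENNReal.ofReal ((ψ x)⁻¹) = ⊤ := by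
    intro δ hδ
    rw [← hφOsg δ hδ]
    refine setLIntegral_congr_fun measurableSet_Ioc (fun x hx => ?_)
    rw [hψφ x hx.1.le, one_div]
  -- clamped solutions
  set U : ℝ → ℝ → ℝ → ℝ := fun γ ε s => u γ ε (max (min s 1) 0) with hUdef
  have clamp_mem : ∀ s : ℝ, max (min s 1) 0 ∈ Set.Icc (0:ℝ) 1 :=
    fun s => ⟨le_max_right _ _, max_le (min_le_right s 1) zero_le_one⟩
  have clamp_eq : ∀ s ∈ Set.Icc (0:ℝ) 1, max (min s 1) 0 = s :=
    fun s hs => by rw [min_eq_left hs.2, max_eq_left hs.1]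
  have hUc : ∀ γ ≥ (0:ℝ), ∀ ε ≥ (0:ℝ), Continuous (U γ ε) := fun γ hγ ε hε =>
    ContinuousOn.comp_continuous (hu γ hγ ε hε).1
      ((continuous_id.min continuous_const).max continuous_const) clamp_mem
  have hUeqU : ∀ γ ε, ∀ s ∈ Set.Icc (0:ℝ) 1, U γ ε s = u γ ε s := by
    intro γ ε s hs
    rw [hUdef]; simp only; rw [clamp_eq s hs]
  have hUeq : ∀ γ ≥ (0:ℝ), ∀ ε ≥ (0:ℝ), ∀ t' ∈ Set.Icc (0:ℝ) 1,
      U γ ε t' = γ + ∫ s in Set.Ioc t' 1, (ψ (U γ ε s) + ε) := by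
    intro γ hγ ε hε t' ht'
    rw [hUeqU _ _ _ ht', (hu γ hγ ε hε).2.2 t' ht']
    congr 1
    refine (setIntegral_congr_fun measurableSet_Ioc (fun s hs => ?_)).symm
    have hs01 : s ∈ Set.Icc (0:ℝ) 1 := ⟨le_trans ht'.1 hs.1.le, hs.2⟩
    rw [hUeqU _ _ _ hs01, hψφ _ ((hu γ hγ ε hε).2.1 s hs01)]
  -- u 0 0 t = 0
  have hu00 : u 0 0 t = 0 := by
    by_contra hne
    have hpos : 0 < u 0 0 t :=
      lt_of_le_of_ne ((hu 0 le_rfl 0 le_rfl).2.1 t ht) (Ne.symm hne)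
    obtain ⟨c, hc0, hcδ, hI⟩ := osgood_extract hψc hψm hψp hOsg hpos
    have hK := sol_K hψc hψm hψ0 hψp le_rfl (hUc 0 le_rfl 0 le_rfl)
      (hUeq 0 le_rfl 0 le_rfl) ht hc0 hc0.le hcδ (le_of_eq (hUeqU 0 0 t ht).symm)
    simp only [add_zero] at hK
    linarith
  refine ⟨fun ε => u 0 ε t, ?_, ?_⟩
  · -- Part 1 : limit in γ
    intro ε hε
    rcases eq_or_lt_of_le hε with hε0 | hεp
    · -- ε = 0
      subst hε0
      simp only
      rw [hu00, Metric.tendsto_nhdsWithin_nhds]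
      intro δ hδ
      obtain ⟨c, hc0, hcδ, hI⟩ := osgood_extract hψc hψm hψp hOsg hδ
      refine ⟨c, hc0, fun {γ} hγmem hγd => ?_⟩
      have hγ0 : (0:ℝ) ≤ γ := hγmem
      rw [Real.dist_eq, sub_zero] at hγd
      have hγc : γ ≤ c := le_of_lt (lt_of_le_of_lt (le_abs_self γ) hγd)
      have hnn := (hu γ hγ0 0 le_rfl).2.1 t ht
      rw [Real.dist_eq, sub_zero, abs_of_nonneg hnn]
      by_contra hge
      push_neg at hge
      have hK := sol_K hψc hψm hψ0 hψp le_rfl (hUc γ hγ0 0 le_rfl)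
        (hUeq γ hγ0 0 le_rfl) ht hc0 hγc hcδ (le_trans hge (le_of_eq (hUeqU γ 0 t ht).symm))
      simp only [add_zero] at hK
      linarith
    · -- ε > 0
      simp only
      set ρ : ℝ → ℝ := fun x => (ψ x + ε)⁻¹ with hρdef
      have hden : ∀ x, 0 < ψ x + ε := fun x => add_pos_of_nonneg_of_pos (hψ0 x) hεp
      have hρc : Continuous ρ :=
        (hψc.add continuous_const).inv₀ fun x => (hden x).ne'
      have hρpos : ∀ x, 0 < ρ x := fun x => inv_pos.2 (hden x)
      set F : ℝ → ℝ := fun y => ∫ x in (0:ℝ)..y, ρ x with hFdef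
      have hEgen : ∀ γ ≥ (0:ℝ), F (u γ ε t) + t = F γ + 1 := by
        intro γ hγ
        have h := sol_E hψc hψ0 hεp (hUc γ hγ ε hε) (hUeq γ hγ ε hε) ht
        rwa [hUeqU γ ε t ht] at h
      have hFadj : ∀ y z : ℝ, F y + (∫ x in y..z, ρ x) = F z := fun y z =>
        intervalIntegral.integral_add_adjacent_intervals (hρc.intervalIntegrable _ _)
          (hρc.intervalIntegrable _ _)
      have hFsm : StrictMono F := by
        intro y z hyz
        have hpos : 0 < ∫ x in y..z, ρ x :=
          intervalIntegral_pos_of_pos (hρc.intervalIntegrable y z) hρpos hyz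
        have := hFadj y z
        linarith
      have hF0 : F 0 = 0 := intervalIntegral.integral_same
      set M : ℝ := u 1 ε t with hM
      set C : ℝ := ε⁻¹ * (ψ M + ε) with hC
      have hCpos : 0 < C := mul_pos (inv_pos.2 hεp) (hden M)
      have key : ∀ γ, 0 ≤ γ → γ ≤ 1 →
          u 0 ε t ≤ u γ ε t ∧ u γ ε t ≤ u 0 ε t + C * γ := by
        intro γ hγ0 hγ1
        have e0 := hEgen 0 le_rfl
        have eγ := hEgen γ hγ0
        have e1 := hEgen 1 zero_le_one
        have hFγ0 : 0 ≤ F γ := by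
          have := hFadj 0 γ
          have h2 : 0 ≤ ∫ x in (0:ℝ)..γ, ρ x :=
            intervalIntegral.integral_nonneg hγ0 (fun x _ => (hρpos x).le)
          linarith
        have hlow : u 0 ε t ≤ u γ ε t := by
          have : F (u 0 ε t) ≤ F (u γ ε t) := by linarith
          exact hFsm.le_iff_le.1 this
        have hγle1 : F γ ≤ F 1 := hFsm.monotone hγ1
        have hup1 : u γ ε t ≤ M := by
          have : F (u γ ε t) ≤ F M := by rw [hM]; linarith
          exact hFsm.le_iff_le.1 this
        -- F γ ≤ γ * ε⁻¹
        have hFγub : F γ ≤ γ * ε⁻¹ := by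
          have hmono : (∫ x in (0:ℝ)..γ, ρ x) ≤ ∫ x in (0:ℝ)..γ, (fun _ : ℝ => ε⁻¹) x :=
            intervalIntegral.integral_mono_on hγ0 (hρc.intervalIntegrable _ _)
              (intervalIntegrable_const)
              (fun x _ => by
                rw [hρdef]
                exact inv_anti₀ hεp (by have := hψ0 x; linarith))
          rw [intervalIntegral.integral_const, smul_eq_mul, sub_zero] at hmono
          exact hmono
        -- lower bound for F (u γ ε t) - F (u 0 ε t)
        have hdiff : F (u γ ε t) - F (u 0 ε t) = ∫ x in (u 0 ε t)..(u γ ε t), ρ x := by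
          have := hFadj (u 0 ε t) (u γ ε t)
          linarith
        have hlb : (u γ ε t - u 0 ε t) * (ψ M + ε)⁻¹ ≤ ∫ x in (u 0 ε t)..(u γ ε t), ρ x := by
          have hmono : (∫ x in (u 0 ε t)..(u γ ε t), (fun _ : ℝ => (ψ M + ε)⁻¹) x)
              ≤ ∫ x in (u 0 ε t)..(u γ ε t), ρ x :=
            intervalIntegral.integral_mono_on hlow intervalIntegrable_const
              (hρc.intervalIntegrable _ _)
              (fun x hx => by
                rw [hρdef]
                refine inv_anti₀ (hden x) ?_
                have : ψ x ≤ ψ M := hψm (le_trans hx.2 hup1)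
                linarith)
          rw [intervalIntegral.integral_const, smul_eq_mul] at hmono
          exact hmono
        have hfinal : u γ ε t - u 0 ε t ≤ C * γ := by
          have h1 : F (u γ ε t) - F (u 0 ε t) = F γ := by linarith
          have h2 : (u γ ε t - u 0 ε t) * (ψ M + ε)⁻¹ ≤ γ * ε⁻¹ := by
            rw [hdiff] at h1; linarith
          have h3 := (hden M)
          have h4 : (0:ℝ) < (ψ M + ε)⁻¹ := inv_pos.2 h3
          rw [hC]
          calc u γ ε t - u 0 ε t = ((u γ ε t - u 0 ε t) * (ψ M + ε)⁻¹) * (ψ M + ε) := by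
                field_simp
            _ ≤ (γ * ε⁻¹) * (ψ M + ε) := by nlinarith
            _ = ε⁻¹ * (ψ M + ε) * γ := by ring
        exact ⟨hlow, by linarith⟩
      have hlim : Tendsto (fun γ : ℝ => u 0 ε t + C * γ) (𝓝[Set.Ici 0] 0) (𝓝 (u 0 ε t)) := by
        have hcont : Continuous fun γ : ℝ => u 0 ε t + C * γ := continuous_const.add (continuous_const.mul continuous_id)
        have h0 : Tendsto (fun γ : ℝ => u 0 ε t + C * γ) (𝓝 0) (𝓝 (u 0 ε t + C * 0)) :=
          hcont.tendsto 0
        simp only [mul_zero, add_zero] at h0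
        exact h0.mono_left nhdsWithin_le_nhds
      have hev : Set.Icc (0:ℝ) 1 ∈ 𝓝[Set.Ici 0] (0:ℝ) :=
        Icc_mem_nhdsGE_of_mem ⟨le_rfl, zero_lt_one⟩
      refine tendsto_of_tendsto_of_tendsto_of_le_of_le' tendsto_const_nhds hlim ?_ ?_
      · filter_upwards [hev] with γ hγ using (key γ hγ.1 hγ.2).1
      · filter_upwards [hev] with γ hγ using (key γ hγ.1 hγ.2).2
  · -- Part 2 : limit in ε
    rw [Metric.tendsto_nhdsWithin_nhds]
    intro δ hδ
    obtain ⟨c, hc0, hcδ, hI⟩ := osgood_extract hψc hψm hψp hOsg hδ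
    have hψcp : 0 < ψ c := hψp c hc0
    set I : ℝ := ∫ x in Set.Ioc c δ, (ψ x)⁻¹ with hIdef
    refine ⟨ψ c * (I - 1), by nlinarith, fun {ε} hεmem hεd => ?_⟩
    have hε0 : (0:ℝ) ≤ ε := hεmem
    rw [Real.dist_eq, sub_zero] at hεd
    have hεlt : ε < ψ c * (I - 1) := lt_of_le_of_lt (le_abs_self ε) hεd
    have hnn := (hu 0 le_rfl ε hε0).2.1 t ht
    rw [Real.dist_eq, sub_zero, abs_of_nonneg hnn]
    by_contra hge
    push_neg at hge
    have hK := sol_K hψc hψm hψ0 hψp hε0 (hUc 0 le_rfl ε hε0)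
      (hUeq 0 le_rfl ε hε0) ht hc0 hc0.le hcδ (le_trans hge (le_of_eq (hUeqU 0 ε t ht).symm))
    -- lower bound on the integral
    have hcd := hcδ.le
    have hintψ : IntegrableOn (fun x => ψ c * (ψ c + ε)⁻¹ * (ψ x)⁻¹) (Set.Ioc c δ) := by
      have hcont : ContinuousOn (fun x => ψ c * (ψ c + ε)⁻¹ * (ψ x)⁻¹) (Set.Icc c δ) := by
        refine (continuousOn_const.mul ?_)
        exact (hψc.continuousOn).inv₀ fun x hx => (hψp x (lt_of_lt_of_le hc0 hx.1)).ne'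
      exact (hcont.integrableOn_Icc).mono_set Set.Ioc_subset_Icc_self
    have hintρ : IntegrableOn (fun x => (ψ x + ε)⁻¹) (Set.Ioc c δ) := by
      have hcont : ContinuousOn (fun x => (ψ x + ε)⁻¹) (Set.Icc c δ) :=
        ((hψc.continuousOn).add continuousOn_const).inv₀ fun x hx => by
          have := hψp x (lt_of_lt_of_le hc0 hx.1); show ψ x + ε ≠ 0; exact (by linarith : (0:ℝ) < ψ x + ε).ne'
      exact (hcont.integrableOn_Icc).mono_set Set.Ioc_subset_Icc_self
    have hptwise : ∀ x ∈ Set.Ioc c δ, ψ c * (ψ c + ε)⁻¹ * (ψ x)⁻¹ ≤ (ψ x + ε)⁻¹ := by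
      intro x hx
      have hA : 0 < ψ c := hψcp
      have hB : ψ c ≤ ψ x := hψm hx.1.le
      have hBp : 0 < ψ x := lt_of_lt_of_le hA hB
      have key1 : ψ c * (ψ c + ε)⁻¹ * (ψ x)⁻¹ = ψ c / ((ψ c + ε) * ψ x) := by
        rw [div_eq_mul_inv, mul_inv, mul_assoc]
      have key2 : (ψ x + ε)⁻¹ = 1 / (ψ x + ε) := (one_div _).symm
      rw [key1, key2, div_le_div_iff₀ (by positivity) (by positivity)]
      nlinarith [mul_le_mul_of_nonneg_left hB hε0]
    have hmono := setIntegral_mono_on hintψ hintρ measurableSet_Ioc hptwise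
    have hconst : ∫ x in Set.Ioc c δ, ψ c * (ψ c + ε)⁻¹ * (ψ x)⁻¹
        = ψ c * (ψ c + ε)⁻¹ * I := by
      rw [hIdef, ← MeasureTheory.integral_const_mul]
    have hgt : 1 < ψ c * (ψ c + ε)⁻¹ * I := by
      have hdenc : 0 < ψ c + ε := by linarith
      have hrw : ψ c * (ψ c + ε)⁻¹ * I = (ψ c * I) / (ψ c + ε) := by ring
      rw [hrw, lt_div_iff₀ hdenc]
      nlinarith
    rw [hconst] at hmono
    linarith
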